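/- Let e be the exponent of A and let M = span(Φ) ⊆ ℂ[A] be an irreducible G-subrepresentation spanned by a set Φ of characters of A. The character χ_M of the G-representation M takes values in the cyclotomic field ℚ(ζ_e), and the Galois group Gal(ℚ(ζ_e)/ℚ) acts on characters of A by post-composition. For τ ∈ Gal(ℚ(ζ_e)/ℚ), one has τ∘χ_M = χ_M if and only if τ permutes the elements of Φ, i.e. {τ∘χ : χ ∈ Φ} = Φ. -/

import Mathlib

noncomputable section

variable {A : Type*} [CommGroup A] [Fintype A]

/-- The semidirect product `G = A ⋊ H`, for `H` a subgroup of `Aut(A)`. -/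
abbrev Gsd (H : Subgroup (MulAut A)) : Type _ := A ⋊[H.subtype] H

/-- The `G`-representation on `ℂ[A] = (A → ℂ)`: `a₀ ∈ A` acts by `(a₀·f)(x) = f(x·a₀)` and
`h ∈ H` acts by `(h·f)(x) = f(h⁻¹ x)`. -/
def rho (H : Subgroup (MulAut A)) (g : Gsd H) : (A → ℂ) →ₗ[ℂ] (A → ℂ) where
  toFun f := fun x => f (((g.right : MulAut A))⁻¹ (x * g.left))
  map_add' _ _ := rfl
  map_smul' _ _ := rfl

/-- `M` is a `G`-subrepresentation of `ℂ[A]`. -/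
def IsSubrep (H : Subgroup (MulAut A)) (M : Submodule ℂ (A → ℂ)) : Prop :=
  ∀ (g : Gsd H) (f : A → ℂ), f ∈ M → rho H g f ∈ M

/-- `M` is an irreducible `G`-subrepresentation of `ℂ[A]`. -/
def IsIrred (H : Subgroup (MulAut A)) (M : Submodule ℂ (A → ℂ)) : Prop :=
  M ≠ ⊥ ∧ ∀ N : Submodule ℂ (A → ℂ), N ≤ M → IsSubrep H N → N = ⊥ ∨ N = M

/-- A character `χ : A →* ℂ` regarded as an element of `ℂ[A] = (A → ℂ)`. -/
def charFun (χ : A →* ℂ) : A → ℂ := fun a => χ a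

/-- The character `χ_M` of the `G`-representation `M`: the trace of the action of `g` on `M`. -/
def repChar (H : Subgroup (MulAut A)) (M : Submodule ℂ (A → ℂ)) (hM : IsSubrep H M)
    (g : Gsd H) : ℂ :=
  LinearMap.trace ℂ ↥M ((rho H g).restrict (fun x hx => hM g x hx))

open Finset

/-- Distinct sets of characters have distinct sums (linear independence of characters). -/
private lemma char_sum_eq {S S' : Finset (A →* ℂ)}
    (h : ∀ a : A, ∑ χ ∈ S, χ a = ∑ χ ∈ S', χ a) : S = S' := by
  classical
  have li := linearIndependent_monoidHom A ℂ
  rw [linearIndependent_iff'] at li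
  have key := li (S ∪ S')
    (fun ψ => (if ψ ∈ S then (1:ℂ) else 0) - (if ψ ∈ S' then 1 else 0)) ?_
  · ext ψ
    constructor <;> intro hψ <;> by_contra h'
    · have := key ψ (Finset.mem_union_left _ hψ); simp [hψ, h'] at this
    · have := key ψ (Finset.mem_union_right _ hψ); simp [hψ, h'] at this
  · funext a
    have h2 : (∑ i ∈ S ∪ S', ((if i ∈ S then (1:ℂ) else 0) - if i ∈ S' then 1 else 0) • ⇑i) a
        = ∑ i ∈ S ∪ S',
            ((if i ∈ S then (1:ℂ) else 0) * i a - (if i ∈ S' then (1:ℂ) else 0) * i a) := by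
      rw [Finset.sum_apply]; simp [sub_mul]
    rw [h2, Finset.sum_sub_distrib]
    simp only [ite_mul, zero_mul, one_mul, Finset.sum_ite_mem,
      Finset.union_inter_cancel_left, Finset.union_inter_cancel_right]
    rw [h a]; simp

private lemma tau_sum {K : IntermediateField ℚ ℂ} (τ : K ≃ₐ[ℚ] K) {ι : Type*} (s : Finset ι)
    (f : ι → ℂ) (hf : ∀ i ∈ s, f i ∈ K) (h : (∑ i ∈ s, f i) ∈ K) :
    (τ ⟨∑ i ∈ s, f i, h⟩ : ℂ) = ∑ i ∈ s.attach, (τ ⟨f i.1, hf i.1 i.2⟩ : ℂ) := by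
  have h1 : (⟨∑ i ∈ s, f i, h⟩ : K) = ∑ i ∈ s.attach, (⟨f i.1, hf i.1 i.2⟩ : K) := by
    apply Subtype.ext
    push_cast
    rw [Finset.sum_attach]
  rw [h1, map_sum]
  push_cast
  rfl

/-- A Galois automorphism applied to a character gives a character. -/
private def tauChar {K : IntermediateField ℚ ℂ} (τ : K ≃ₐ[ℚ] K)
    (χ : A →* ℂ) (hv : ∀ a, χ a ∈ K) : A →* ℂ where
  toFun a := (τ ⟨χ a, hv a⟩ : ℂ)
  map_one' := by
    have h1 : (⟨χ 1, hv 1⟩ : K) = 1 := by ext; simp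
    show (τ ⟨χ 1, hv 1⟩ : ℂ) = 1
    rw [h1, map_one]; rfl
  map_mul' x y := by
    have h1 : (⟨χ (x*y), hv (x*y)⟩ : K) = ⟨χ x, hv x⟩ * ⟨χ y, hv y⟩ := by ext; simp
    show (τ ⟨χ (x*y), hv (x*y)⟩ : ℂ) = (τ ⟨χ x, hv x⟩ : ℂ) * (τ ⟨χ y, hv y⟩ : ℂ)
    rw [h1, map_mul]; push_cast; rfl

private lemma tauChar_inj {K : IntermediateField ℚ ℂ} (τ : K ≃ₐ[ℚ] K)
    {χ χ' : A →* ℂ} (hv : ∀ a, χ a ∈ K) (hv' : ∀ a, χ' a ∈ K)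
    (h : tauChar τ χ hv = tauChar τ χ' hv') : χ = χ' := by
  ext a
  have h1 : (τ ⟨χ a, hv a⟩ : ℂ) = (τ ⟨χ' a, hv' a⟩ : ℂ) := DFunLike.congr_fun h a
  exact Subtype.ext_iff.mp (τ.injective (Subtype.ext h1))

/-- Explicit formula for the trace of `g` on `M = span Φ`. -/
private lemma repChar_formula (H : Subgroup (MulAut A)) (Φ : Finset (A →* ℂ))
    (M : Submodule ℂ (A → ℂ)) (hMdef : M = Submodule.span ℂ (charFun '' ↑Φ))
    (hM : IsSubrep H M) (g : Gsd H) :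
    repChar H M hM g = ∑ χ ∈ Φ,
      if χ.comp ((g.right : MulAut A)⁻¹ : MulAut A).toMonoidHom = χ
      then χ (((g.right : MulAut A))⁻¹ g.left) else 0 := by
  classical
  set h : MulAut A := (g.right : MulAut A) with hh
  have li : LinearIndependent ℂ (fun χ : A →* ℂ => ⇑χ) := linearIndependent_monoidHom A ℂ
  have hli : LinearIndependent ℂ (fun χ : ↥Φ => charFun χ.1) :=
    li.comp Subtype.val Subtype.val_injective
  have eqM : Submodule.span ℂ (Set.range fun χ : ↥Φ => charFun χ.1) = M := by
    rw [hMdef]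
    congr 1
    ext f
    simp [Set.mem_image, eq_comm]
  let B : Module.Basis ↥Φ ℂ ↥M := (Module.Basis.span hli).map (LinearEquiv.ofEq _ _ eqM)
  have hB : ∀ χ : ↥Φ, (B χ : A → ℂ) = charFun χ.1 := fun χ => by
    simp [B, Module.Basis.span_apply, LinearEquiv.coe_ofEq_apply]
  have step : ∀ χ : A →* ℂ, rho H g (charFun χ)
      = χ (h⁻¹ g.left) • charFun (χ.comp (h⁻¹ : MulAut A).toMonoidHom) := by
    intro χ
    funext x
    show χ (h⁻¹ (x * g.left)) = χ (h⁻¹ g.left) * χ (h⁻¹ x)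
    rw [map_mul, map_mul, mul_comm]
  have char_ne : ∀ (χ : A →* ℂ) (a : A), χ a ≠ 0 := by
    intro χ a
    have : χ a * χ a⁻¹ = 1 := by rw [← map_mul, mul_inv_cancel, map_one]
    exact left_ne_zero_of_mul_eq_one this
  have memΦ : ∀ χ ∈ Φ, χ.comp (h⁻¹ : MulAut A).toMonoidHom ∈ Φ := by
    intro χ hχ
    have h1 : rho H g (charFun χ) ∈ M :=
      hM g _ (hMdef ▸ Submodule.subset_span ⟨χ, hχ, rfl⟩)
    rw [step] at h1
    have h2 : charFun (χ.comp (h⁻¹ : MulAut A).toMonoidHom) ∈ M := by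
      have := M.smul_mem (χ (h⁻¹ g.left))⁻¹ h1
      rwa [smul_smul, inv_mul_cancel₀ (char_ne _ _), one_smul] at this
    by_contra hmem
    exact li.notMem_span_image hmem (hMdef ▸ h2)
  rw [repChar, LinearMap.trace_eq_matrix_trace ℂ B, Matrix.trace]
  have diag : ∀ χ : ↥Φ, Matrix.diag (LinearMap.toMatrix B B
      ((rho H g).restrict (fun x hx => hM g x hx))) χ
      = if χ.1.comp (h⁻¹ : MulAut A).toMonoidHom = χ.1 then χ.1 (h⁻¹ g.left) else 0 := by
    intro χ
    have hrestrict : (rho H g).restrict (fun x hx => hM g x hx) (B χ)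
        = χ.1 (h⁻¹ g.left) • B ⟨χ.1.comp (h⁻¹ : MulAut A).toMonoidHom, memΦ χ.1 χ.2⟩ := by
      apply Subtype.ext
      rw [LinearMap.restrict_apply]
      show rho H g (B χ : A → ℂ) = _
      rw [hB]
      push_cast
      rw [hB, step]
    rw [Matrix.diag, LinearMap.toMatrix_apply, hrestrict, map_smul,
      Module.Basis.repr_self, Finsupp.smul_single, Finsupp.single_apply]
    by_cases hc : χ.1.comp (h⁻¹ : MulAut A).toMonoidHom = χ.1
    · rw [if_pos hc, if_pos (Subtype.ext hc), smul_eq_mul, mul_one]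
    · rw [if_neg hc, if_neg (fun hcc => hc (congrArg Subtype.val hcc))]
  rw [Finset.sum_congr rfl (fun χ _ => diag χ), Finset.sum_coe_sort Φ
    (fun χ => if χ.comp (h⁻¹ : MulAut A).toMonoidHom = χ then χ (h⁻¹ g.left) else 0)]

/-- Let `e` be the exponent of `A` and `M = span(Φ)` an irreducible
`G`-subrepresentation of `ℂ[A]` spanned by a set `Φ` of characters of `A` (whose values lie in
the cyclotomic field `K = ℚ(ζ_e) ⊆ ℂ`).  Then the character `χ_M` of `M` takes values in `K`,
and for `τ ∈ Gal(ℚ(ζ_e)/ℚ)` one has `τ∘χ_M = χ_M` if and only if `τ` permutes the elements of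
`Φ`, i.e. `{τ∘χ : χ ∈ Φ} = Φ`. -/
theorem statement_7 (H : Subgroup (MulAut A)) (Φ : Finset (A →* ℂ))
    (M : Submodule ℂ (A → ℂ)) (hMdef : M = Submodule.span ℂ (charFun '' ↑Φ))
    (hM : IsSubrep H M) (hMirr : IsIrred H M)
    (e : ℕ) (he : e = Monoid.exponent A) (ζ : ℂ) (hζ : IsPrimitiveRoot ζ e)
    (K : IntermediateField ℚ ℂ) (hK : K = IntermediateField.adjoin ℚ {ζ})
    (hvals : ∀ χ ∈ Φ, ∀ a : A, χ a ∈ K)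
    (τ : K ≃ₐ[ℚ] K) :
    ∃ hval : ∀ g : Gsd H, repChar H M hM g ∈ K,
      ((∀ g : Gsd H, (τ ⟨repChar H M hM g, hval g⟩ : ℂ) = repChar H M hM g) ↔
        ((∀ χ, ∀ hχ : χ ∈ Φ, ∃ χ' ∈ Φ, ∀ a : A,
            (τ ⟨χ a, hvals χ hχ a⟩ : ℂ) = χ' a) ∧
         (∀ χ' ∈ Φ, ∃ χ, ∃ hχ : χ ∈ Φ, ∀ a : A,
            (τ ⟨χ a, hvals χ hχ a⟩ : ℂ) = χ' a))) := by
  classical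
  have key := repChar_formula H Φ M hMdef hM
  have hval : ∀ g : Gsd H, repChar H M hM g ∈ K := by
    intro g
    rw [key g]
    refine sum_mem (fun χ hχ => ?_)
    split
    · exact hvals χ hχ _
    · exact zero_mem K
  refine ⟨hval, ?_, ?_⟩
  · -- forward
    intro hfix
    have hA : ∀ a : A, repChar H M hM (SemidirectProduct.inl a) = ∑ χ ∈ Φ, χ a := by
      intro a
      rw [key]
      refine Finset.sum_congr rfl (fun χ _ => ?_)
      rw [if_pos]
      · show χ (((1 : MulAut A))⁻¹ ((SemidirectProduct.inl a : Gsd H).left)) = χ a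
        simp
      · show χ.comp ((1 : MulAut A)⁻¹ : MulAut A).toMonoidHom = χ
        ext x
        simp
    have hsum : ∀ a : A,
        ∑ χ ∈ Φ.attach, tauChar τ χ.1 (hvals χ.1 χ.2) a = ∑ χ ∈ Φ, χ a := by
      intro a
      have hmem : (∑ χ ∈ Φ, χ a) ∈ K := sum_mem (fun χ hχ => hvals χ hχ a)
      have h2 := tau_sum τ Φ (fun χ => χ a) (fun χ hχ => hvals χ hχ a) hmem
      have h3 : (⟨repChar H M hM (SemidirectProduct.inl a), hval _⟩ : K)
          = ⟨∑ χ ∈ Φ, χ a, hmem⟩ := Subtype.ext (hA a)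
      have h4 := hfix (SemidirectProduct.inl a)
      rw [h3, h2] at h4
      exact h4.symm ▸ (h4.trans (hA a))
    set S : Finset (A →* ℂ) := Φ.attach.image (fun χ => tauChar τ χ.1 (hvals χ.1 χ.2)) with hS
    have hinj : Set.InjOn (fun χ : ↥Φ => tauChar τ χ.1 (hvals χ.1 χ.2)) ↑Φ.attach :=
      fun χ _ χ' _ hEq => Subtype.ext (tauChar_inj τ _ _ hEq)
    have hSΦ : S = Φ := by
      refine char_sum_eq (fun a => ?_)
      rw [hS, Finset.sum_image hinj]
      exact hsum a
    constructor
    · intro χ hχ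
      refine ⟨tauChar τ χ (hvals χ hχ), ?_, fun a => rfl⟩
      rw [← hSΦ]
      exact Finset.mem_image_of_mem _ (Finset.mem_attach _ ⟨χ, hχ⟩)
    · intro χ' hχ'
      rw [← hSΦ] at hχ'
      obtain ⟨⟨χ, hχ⟩, -, hEq⟩ := Finset.mem_image.mp hχ'
      exact ⟨χ, hχ, fun a => DFunLike.congr_fun hEq a⟩
  · -- backward
    rintro ⟨h1, h2⟩ g
    set h : MulAut A := (g.right : MulAut A) with hh
    set b : A := h⁻¹ g.left with hb
    set Fix : Finset (A →* ℂ) :=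
      Φ.filter (fun χ => χ.comp (h⁻¹ : MulAut A).toMonoidHom = χ) with hFix
    have hFixΦ : ∀ χ ∈ Fix, χ ∈ Φ := fun χ hχ => (Finset.mem_filter.mp hχ).1
    have hrc : repChar H M hM g = ∑ χ ∈ Fix, χ b := by
      rw [key g, hFix, Finset.sum_filter]
    have hmemK : (∑ χ ∈ Fix, χ b) ∈ K := sum_mem fun χ hχ => hvals χ (hFixΦ χ hχ) b
    -- the image of Fix under tauChar is Fix
    have himg : ∀ χ, ∀ hχ : χ ∈ Fix, tauChar τ χ (hvals χ (hFixΦ χ hχ)) ∈ Fix := by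
      intro χ hχ
      have hχΦ : χ ∈ Φ := hFixΦ χ hχ
      have hχfix : χ.comp (h⁻¹ : MulAut A).toMonoidHom = χ := (Finset.mem_filter.mp hχ).2
      obtain ⟨χ'', hχ'', hEq⟩ := h1 χ hχΦ
      have heq2 : tauChar τ χ (hvals χ hχΦ) = χ'' := MonoidHom.ext hEq
      rw [Finset.mem_filter]
      constructor
      · rw [heq2]; exact hχ''
      · ext a
        show (τ ⟨χ (h⁻¹ a), _⟩ : ℂ) = (τ ⟨χ a, _⟩ : ℂ)
        have : χ (h⁻¹ a) = χ a := DFunLike.congr_fun hχfix a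
        exact congrArg (fun z : K => (τ z : ℂ)) (Subtype.ext this)
    set T : ↥Fix → (A →* ℂ) := fun χ => tauChar τ χ.1 (hvals χ.1 (hFixΦ χ.1 χ.2)) with hT
    have hinj : Set.InjOn T ↑Fix.attach :=
      fun χ _ χ' _ hEq => Subtype.ext (tauChar_inj τ _ _ hEq)
    have hS'sub : Fix.attach.image T ⊆ Fix := by
      intro ψ hψ
      obtain ⟨χ, -, hEq⟩ := Finset.mem_image.mp hψ
      rw [← hEq]
      exact himg χ.1 χ.2
    have hS'eq : Fix.attach.image T = Fix := by
      refine Finset.eq_of_subset_of_card_le hS'sub (le_of_eq ?_)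
      rw [Finset.card_image_of_injOn hinj, Finset.card_attach]
    have h3 : (⟨repChar H M hM g, hval g⟩ : K) = ⟨∑ χ ∈ Fix, χ b, hmemK⟩ := Subtype.ext hrc
    rw [h3, tau_sum τ Fix (fun χ => χ b) (fun χ hχ => hvals χ (hFixΦ χ hχ) b) hmemK]
    have h4 : ∑ χ ∈ Fix.attach, (τ ⟨χ.1 b, hvals χ.1 (hFixΦ χ.1 χ.2) b⟩ : ℂ)
        = ∑ ψ ∈ Fix.attach.image T, ψ b := by
      rw [Finset.sum_image hinj]
      rfl
    rw [h4, hS'eq, ← hrc]
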